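/- Let $0 < b < a$ and for $x \in [0,a]$ let $\mathcal{D}(x) \ge 0$ be the distance from the point $(x,0)$ to the ellipse $\mathcal{E}(a,b)$, i.e. $\mathcal{D}(x)^2 = \min_{(s,t) \in \mathcal{E}(a,b)}\big((s-x)^2+t^2\big)$. Then $\mathcal{D}$ is strictly decreasing on $[0,a]$; in particular, for every $s \in [0,a]$, $\min_{x \in [0,s]} \mathcal{D}(x) = \mathcal{D}(s)$. -/

import Mathlib

private lemma ell_isLeast (a b x : ℝ) (hb : 0 < b) (hba : b < a)
    (hx0 : 0 ≤ x) (hxa : x ≤ a) :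
    IsLeast {D : ℝ | ∃ s t : ℝ, (s/a)^2 + (t/b)^2 = 1 ∧ D = (s-x)^2 + t^2}
      (if x * a ≤ a^2 - b^2 then b^2 - b^2 * x^2 / (a^2 - b^2) else (a - x)^2) := by
  have ha : (0:ℝ) < a := hb.trans hba
  have hab2 : (0:ℝ) < a^2 - b^2 := by nlinarith
  constructor
  · by_cases hc : x * a ≤ a^2 - b^2
    · simp only [if_pos hc]
      set s0 : ℝ := a^2 * x / (a^2 - b^2) with hs0
      have hs0nn : 0 ≤ s0 := by positivity
      have hs0le : s0 ≤ a := by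
        rw [hs0, div_le_iff₀ hab2]; nlinarith
      have hin : 0 ≤ b^2 - b^2 * s0^2 / a^2 := by
        have h1 : s0^2 ≤ a^2 := by nlinarith
        have h2 : b^2 * s0^2 / a^2 ≤ b^2 := by
          rw [div_le_iff₀ (by positivity)]; nlinarith
        linarith
      set t0 : ℝ := Real.sqrt (b^2 - b^2 * s0^2 / a^2) with ht0
      have hsq : t0^2 = b^2 - b^2 * s0^2 / a^2 := Real.sq_sqrt hin
      refine ⟨s0, t0, ?_, ?_⟩
      · have key : (t0/b)^2 = (b^2 - b^2*s0^2/a^2)/b^2 := by rw [div_pow, hsq]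
        rw [key, hs0]
        field_simp
        ring
      · rw [hsq, hs0]
        field_simp
        ring
    · simp only [if_neg hc]
      exact ⟨a, 0, by field_simp; ring, by ring⟩
  · rintro D ⟨s, t, hell, rfl⟩
    have ht2 : t^2 = b^2 - b^2 * s^2 / a^2 := by
      field_simp at hell
      field_simp
      nlinarith [hell]
    have hs2 : s^2 ≤ a^2 := by
      have h0 : 0 ≤ t^2 := sq_nonneg t
      rw [ht2] at h0
      have h1 : b^2 * s^2 / a^2 ≤ b^2 := by linarith
      rw [div_le_iff₀ (by positivity)] at h1
      nlinarith [mul_pos hb hb]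
    rw [ht2]
    by_cases hc : x * a ≤ a^2 - b^2
    · simp only [if_pos hc]
      rw [← sub_nonneg]
      have hid : (s - x)^2 + (b^2 - b^2*s^2/a^2) - (b^2 - b^2*x^2/(a^2-b^2))
          = ((a^2-b^2)*s - a^2*x)^2 / (a^2*(a^2-b^2)) := by
        field_simp
        ring
      rw [hid]; positivity
    · simp only [if_neg hc]
      rw [← sub_nonneg]
      have hsa : s ≤ a := by nlinarith
      have hid : (s - x)^2 + (b^2 - b^2*s^2/a^2) - (a-x)^2
          = (a-s)*(2*a^2*x - (a^2-b^2)*(s+a))/a^2 := by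
        field_simp
        ring
      rw [hid]
      apply div_nonneg _ (by positivity)
      apply mul_nonneg (by linarith)
      nlinarith

noncomputable def gfun (a b x : ℝ) : ℝ :=
  if x * a ≤ a^2 - b^2 then b^2 - b^2 * x^2 / (a^2 - b^2) else (a - x)^2

private lemma gfun_nonneg (a b x : ℝ) (hb : 0 < b) (hba : b < a) (hx0 : 0 ≤ x) :
    0 ≤ gfun a b x := by
  have ha : (0:ℝ) < a := hb.trans hba
  have hab2 : (0:ℝ) < a^2 - b^2 := by nlinarith
  unfold gfun
  by_cases hc : x * a ≤ a^2 - b^2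
  · simp only [if_pos hc]
    rw [sub_nonneg, div_le_iff₀ hab2]
    have hx2 : x^2 ≤ a^2 - b^2 := by
      nlinarith [mul_le_mul hc hc (mul_nonneg hx0 ha.le) hab2.le, mul_pos ha ha,
        mul_pos hab2 (mul_pos hb hb)]
    nlinarith
  · simp only [if_neg hc]
    positivity

private lemma gfun_anti (a b : ℝ) (hb : 0 < b) (hba : b < a) :
    StrictAntiOn (gfun a b) (Set.Icc 0 a) := by
  have ha : (0:ℝ) < a := hb.trans hba
  have hab2 : (0:ℝ) < a^2 - b^2 := by nlinarith
  rintro x ⟨hx0, hxa⟩ y ⟨hy0, hya⟩ hxy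
  unfold gfun
  by_cases hcy : y * a ≤ a^2 - b^2
  · have hcx : x * a ≤ a^2 - b^2 := by nlinarith
    simp only [if_pos hcy, if_pos hcx]
    have h1 : b^2 * x^2 / (a^2 - b^2) < b^2 * y^2 / (a^2 - b^2) := by
      apply div_lt_div_of_pos_right _ hab2
      have hxy2 : x^2 < y^2 := by nlinarith
      exact mul_lt_mul_of_pos_left hxy2 (by positivity)
    linarith
  · by_cases hcx : x * a ≤ a^2 - b^2
    · simp only [if_neg hcy, if_pos hcx]
      rw [← sub_pos]
      have hid : b^2 - b^2*x^2/(a^2-b^2) - (a-y)^2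
          = ((b^2*(a^2-b^2) - b^2*x^2) - (a-y)^2*(a^2-b^2)) / (a^2-b^2) := by
        field_simp
      rw [hid]
      apply div_pos _ hab2
      have e : (a-y)*a < b^2 := by nlinarith
      have e0 : 0 ≤ (a-y)*a := mul_nonneg (by linarith) ha.le
      have h1 : (a-y)^2 * a^2 < b^4 := by nlinarith [mul_self_lt_mul_self e0 e]
      have h2 : b^2 * x^2 * a^2 ≤ b^2 * (a^2-b^2)^2 := by
        nlinarith [mul_self_le_mul_self (mul_nonneg hx0 ha.le) hcx, mul_pos hb hb]
      nlinarith [h1, h2, mul_pos ha ha, hab2]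
    · simp only [if_neg hcy, if_neg hcx]
      have : 0 ≤ a - y := by linarith
      nlinarith

/-- for `0 < b < a`, the distance `𝒟(x)` from `(x,0)` to the ellipse
`(s/a)² + (t/b)² = 1` is strictly decreasing on `[0,a]`; in particular, for every
`s ∈ [0,a]`, `min_{x ∈ [0,s]} 𝒟(x) = 𝒟(s)`. -/
theorem dist_to_ellipse_strictAnti
    (a b : ℝ) (hb : 0 < b) (hba : b < a) :
    StrictAntiOn (fun x : ℝ =>
        Real.sqrt (sInf {D : ℝ | ∃ s t : ℝ,
          (s / a) ^ 2 + (t / b) ^ 2 = 1 ∧ D = (s - x) ^ 2 + t ^ 2}))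
      (Set.Icc 0 a) ∧
    ∀ s ∈ Set.Icc (0 : ℝ) a,
      sInf ((fun x : ℝ =>
          Real.sqrt (sInf {D : ℝ | ∃ u t : ℝ,
            (u / a) ^ 2 + (t / b) ^ 2 = 1 ∧ D = (u - x) ^ 2 + t ^ 2})) '' Set.Icc 0 s)
        = Real.sqrt (sInf {D : ℝ | ∃ u t : ℝ,
            (u / a) ^ 2 + (t / b) ^ 2 = 1 ∧ D = (u - s) ^ 2 + t ^ 2}) := by
  have key : ∀ x : ℝ, 0 ≤ x → x ≤ a →
      sInf {D : ℝ | ∃ s t : ℝ, (s / a) ^ 2 + (t / b) ^ 2 = 1 ∧ D = (s - x) ^ 2 + t ^ 2}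
        = gfun a b x := by
    intro x hx0 hxa
    unfold gfun
    exact (ell_isLeast a b x hb hba hx0 hxa).csInf_eq
  have hD : StrictAntiOn (fun x : ℝ =>
      Real.sqrt (sInf {D : ℝ | ∃ s t : ℝ,
        (s / a) ^ 2 + (t / b) ^ 2 = 1 ∧ D = (s - x) ^ 2 + t ^ 2})) (Set.Icc 0 a) := by
    intro x hx y hy hxy
    simp only
    rw [key x hx.1 hx.2, key y hy.1 hy.2]
    exact Real.sqrt_lt_sqrt (gfun_nonneg a b y hb hba hy.1)
      (gfun_anti a b hb hba hx hy hxy)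
  refine ⟨hD, ?_⟩
  intro s hs
  apply IsLeast.csInf_eq
  constructor
  · exact ⟨s, ⟨hs.1, le_refl s⟩, rfl⟩
  · rintro d ⟨x, hx, rfl⟩
    have hx' : x ∈ Set.Icc (0:ℝ) a := ⟨hx.1, hx.2.trans hs.2⟩
    rcases eq_or_lt_of_le hx.2 with h | h
    · subst h; exact le_refl _
    · exact (hD hx' hs h).le
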